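/- Every real 2n×2n symplectic matrix S can be written as a product S = S₁·S₂ where S₁ and S₂ are symplectic matrices whose upper-right n×n blocks are invertible (i.e., free symplectic matrices) and which in addition satisfy det(S₁ − I) ≠ 0 and det(S₂ − I) ≠ 0. -/

import Mathlib

open Matrix

/-- The standard symplectic matrix `J = [[0, I],[-I, 0]]`. -/
noncomputable def sympJ (n : ℕ) : Matrix (Fin n ⊕ Fin n) (Fin n ⊕ Fin n) ℝ :=
  Matrix.fromBlocks 0 1 (-1) 0

namespace SympAux
variable {n : ℕ}

lemma JJ : sympJ n * sympJ n = -1 := by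
  simp [sympJ, Matrix.fromBlocks_multiply, ← Matrix.fromBlocks_one]
  ext (i|i) (j|j) <;> simp [Matrix.fromBlocks]

lemma JT : (sympJ n)ᵀ = -(sympJ n) := by
  simp [sympJ, Matrix.fromBlocks_transpose]
  ext (i|i) (j|j) <;> simp [Matrix.fromBlocks]

noncomputable def Rmat (n : ℕ) (c s : ℝ) : Matrix (Fin n ⊕ Fin n) (Fin n ⊕ Fin n) ℝ :=
  c • 1 + s • sympJ n

lemma Rmul (c s c' s' : ℝ) :
    Rmat n c s * Rmat n c' s' = Rmat n (c*c' - s*s') (c*s' + s*c') := by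
  simp only [Rmat, Matrix.add_mul, Matrix.mul_add, smul_mul_assoc, mul_smul_comm,
    Matrix.one_mul, Matrix.mul_one, JJ, smul_neg, sub_smul, add_smul, smul_smul]
  module

lemma RT (c s : ℝ) : (Rmat n c s)ᵀ = Rmat n c (-s) := by
  simp [Rmat, Matrix.transpose_add, Matrix.transpose_smul, Matrix.transpose_one, JT]

lemma RJ : Rmat n 0 1 = sympJ n := by simp [Rmat]

lemma Rsymp (c s : ℝ) (h : c^2 + s^2 = 1) :
    (Rmat n c s)ᵀ * sympJ n * Rmat n c s = sympJ n := by
  rw [RT, ← RJ, Rmul, Rmul,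
    show (c * 0 - -s * 1) * c - (c * 1 + -s * 0) * s = 0 by ring,
    show (c * 0 - -s * 1) * s + (c * 1 + -s * 0) * c = 1 by nlinarith, RJ]

lemma Rinv (c s : ℝ) : Rmat n c s * Rmat n c (-s) = (c^2 + s^2) • 1 := by
  rw [Rmul, show c * c - s * (-s) = c^2 + s^2 by ring, show c * (-s) + s * c = 0 by ring]
  simp [Rmat]

lemma Rdet_ne (c s : ℝ) (h : c^2 + s^2 ≠ 0) : (Rmat n c s).det ≠ 0 := by
  have h1 := congrArg Matrix.det (Rinv (n := n) c s)
  rw [Matrix.det_mul, Matrix.det_smul, Matrix.det_one, mul_one] at h1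
  intro h0
  rw [h0, zero_mul] at h1
  exact (pow_ne_zero _ h) h1.symm

lemma Jdet_ne : (sympJ n).det ≠ 0 := by
  have := Rdet_ne (n := n) 0 1 (by norm_num)
  rwa [RJ] at this

lemma Rone (c s : ℝ) (h : c^2 + s^2 = 1) : Rmat n c s * Rmat n c (-s) = 1 := by
  rw [Rinv, h, one_smul]

lemma Rone' (c s : ℝ) (h : c^2 + s^2 = 1) : Rmat n c (-s) * Rmat n c s = 1 := by
  have := Rone (n := n) c (-s) (by rw [← h]; ring)
  rwa [neg_neg] at this

section Smat
variable {S : Matrix (Fin n ⊕ Fin n) (Fin n ⊕ Fin n) ℝ}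
  (hS : Sᵀ * sympJ n * S = sympJ n)

include hS

lemma Sdet_ne : S.det ≠ 0 := by
  have h1 := congrArg Matrix.det hS
  rw [Matrix.det_mul, Matrix.det_mul, Matrix.det_transpose] at h1
  intro h0
  rw [h0, mul_zero] at h1
  exact Jdet_ne h1.symm

lemma SJST : S * sympJ n * Sᵀ = sympJ n := by
  have hL : (-(sympJ n) * Sᵀ * sympJ n) * S = 1 := by
    calc (-(sympJ n) * Sᵀ * sympJ n) * S
        = -(sympJ n) * (Sᵀ * sympJ n * S) := by
          simp only [Matrix.mul_assoc, Matrix.neg_mul]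
      _ = 1 := by rw [hS, Matrix.neg_mul, JJ, neg_neg]
  have hR : S * (-(sympJ n) * Sᵀ * sympJ n) = 1 := mul_eq_one_comm.mp hL
  have : S * (-(sympJ n)) * Sᵀ * (sympJ n * -(sympJ n)) = -(sympJ n) := by
    calc S * (-(sympJ n)) * Sᵀ * (sympJ n * -(sympJ n))
        = (S * (-(sympJ n) * Sᵀ * sympJ n)) * (-(sympJ n)) := by
          simp only [Matrix.mul_assoc]
      _ = -(sympJ n) := by rw [hR, Matrix.one_mul]
  have h2 : sympJ n * -(sympJ n) = 1 := by rw [Matrix.mul_neg, JJ, neg_neg]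
  rw [h2, Matrix.mul_one] at this
  have := congrArg Neg.neg this
  simpa [Matrix.mul_neg, Matrix.neg_mul] using this

lemma symp_form_mulVec (v w : Fin n ⊕ Fin n → ℝ) :
    (S *ᵥ v) ⬝ᵥ (sympJ n *ᵥ (S *ᵥ w)) = v ⬝ᵥ (sympJ n *ᵥ w) := by
  rw [Matrix.mulVec_mulVec, Matrix.dotProduct_mulVec, Matrix.vecMul_mulVec,
    ← Matrix.mul_assoc, hS, ← Matrix.dotProduct_mulVec]

lemma symp_form_vecMul (z z' : Fin n ⊕ Fin n → ℝ) :
    (z ᵥ* S) ⬝ᵥ (sympJ n *ᵥ (z' ᵥ* S)) = z ⬝ᵥ (sympJ n *ᵥ z') := by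
  have h1 : z' ᵥ* S = Sᵀ *ᵥ z' := (Matrix.mulVec_transpose S z').symm
  have h2 : z ᵥ* S ᵥ* (sympJ n * Sᵀ) = z ᵥ* (S * (sympJ n * Sᵀ)) := Matrix.vecMul_vecMul ..
  rw [h1, Matrix.mulVec_mulVec, Matrix.dotProduct_mulVec, h2, ← Matrix.mul_assoc, SJST hS,
    ← Matrix.dotProduct_mulVec]

end Smat

lemma JTJ : (sympJ n)ᵀ * sympJ n = 1 := by
  rw [JT, Matrix.neg_mul, JJ, neg_neg]

lemma dot_JJ (a b : Fin n ⊕ Fin n → ℝ) :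
    (sympJ n *ᵥ a) ⬝ᵥ (sympJ n *ᵥ b) = a ⬝ᵥ b := by
  rw [Matrix.dotProduct_mulVec, Matrix.vecMul_mulVec, JTJ, Matrix.vecMul_one]

lemma dot_J_left (a b : Fin n ⊕ Fin n → ℝ) :
    (sympJ n *ᵥ a) ⬝ᵥ b = -(a ⬝ᵥ (sympJ n *ᵥ b)) := by
  rw [dotProduct_comm, Matrix.dotProduct_mulVec,
    show (b ᵥ* sympJ n) = (sympJ n)ᵀ *ᵥ b from by
      rw [show sympJ n = ((sympJ n)ᵀ)ᵀ from (Matrix.transpose_transpose _).symm, Matrix.vecMul_transpose,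
        Matrix.transpose_transpose],
    JT, Matrix.neg_mulVec, neg_dotProduct, dotProduct_comm]

lemma omega_elim (a1 a2 b1 b2 : Fin n → ℝ) :
    Sum.elim a1 a2 ⬝ᵥ (sympJ n *ᵥ Sum.elim b1 b2) = a1 ⬝ᵥ b2 - a2 ⬝ᵥ b1 := by
  rw [sympJ, Matrix.fromBlocks_mulVec]
  simp [sumElim_dotProduct_sumElim, Matrix.neg_mulVec, sub_eq_add_neg]

lemma orth_fam_false {ι : Type*} [Fintype ι] (f : ℕ → (ι → ℝ))
    (h0 : ∀ k, f k ⬝ᵥ f k ≠ 0) (horth : ∀ k l, k ≠ l → f k ⬝ᵥ f l = 0) : False := by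
  have li : LinearIndependent ℝ f := by
    rw [linearIndependent_iff']
    intro t g hsum k hk
    have expand : (∑ i ∈ t, g i • f i) ⬝ᵥ f k = ∑ i ∈ t, g i * (f i ⬝ᵥ f k) := by
      simp only [dotProduct, Finset.sum_apply, Pi.smul_apply, smul_eq_mul,
        Finset.sum_mul, Finset.mul_sum]
      rw [Finset.sum_comm]
      simp [mul_assoc]
    have h : ∑ i ∈ t, g i * (f i ⬝ᵥ f k) = 0 := by
      rw [← expand, hsum, zero_dotProduct]
    rw [Finset.sum_eq_single_of_mem k hk
      (fun l _ hlk => by rw [horth l k hlk, mul_zero])] at h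
    rcases mul_eq_zero.mp h with h' | h'
    · exact h'
    · exact absurd h' (h0 k)
  have hcard := li.lt_aleph0_of_finite
  simp [Cardinal.mk_eq_aleph0] at hcard

noncomputable def cc (u : ℝ) : ℝ := (1 - u^2)/(1 + u^2)
noncomputable def ss (u : ℝ) : ℝ := 2*u/(1 + u^2)

lemma den_pos (u : ℝ) : (0:ℝ) < 1 + u^2 := by positivity

lemma ccss (u : ℝ) : cc u ^ 2 + ss u ^ 2 = 1 := by
  have h := (den_pos u).ne'
  rw [cc, ss, div_pow, div_pow, ← add_div, div_eq_one_iff_eq (by positivity)]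
  ring

lemma ss_pos {u : ℝ} (hu : 0 < u) : 0 < ss u := by
  rw [ss]; positivity

lemma cross_ne {u u' : ℝ} (hu : 0 < u) (hu' : 0 < u') (hne : u ≠ u') :
    cc u * ss u' - cc u' * ss u ≠ 0 := by
  have h1 := (den_pos u).ne'
  have h2 := (den_pos u').ne'
  have key : cc u * ss u' - cc u' * ss u
      = 2*(u' - u)*(1 + u*u')/((1 + u^2)*(1 + u'^2)) := by
    rw [cc, ss, cc, ss]; field_simp; ring
  rw [key]
  apply div_ne_zero _ (by positivity)
  have : u' - u ≠ 0 := sub_ne_zero.mpr (Ne.symm hne)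
  have : (0:ℝ) < 1 + u*u' := by nlinarith
  positivity

lemma circle_key {u u' ω ip : ℝ} (hne : u ≠ u')
    (hrel : (cc u * cc u' + ss u * ss u' - 1) * ω + (ss u * cc u' - cc u * ss u') * ip = 0) :
    (1 + u*u') * ip + (u' - u) * ω = 0 := by
  have h1 := (den_pos u).ne'
  have h2 := (den_pos u').ne'
  have e1 : cc u * cc u' + ss u * ss u' - 1
      = -2*(u' - u)^2/((1 + u^2)*(1 + u'^2)) := by
    rw [cc, ss, cc, ss]; field_simp; ring
  have e2 : ss u * cc u' - cc u * ss u'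
      = -2*(u' - u)*(1 + u*u')/((1 + u^2)*(1 + u'^2)) := by
    rw [cc, ss, cc, ss]; field_simp; ring
  rw [e1, e2, div_mul_eq_mul_div, div_mul_eq_mul_div, ← add_div,
    div_eq_zero_iff] at hrel
  rcases hrel with hrel | hrel
  · have hu : u' - u ≠ 0 := sub_ne_zero.mpr (Ne.symm hne)
    have hA : (-2*(u' - u)) ≠ 0 := by simp [hu]
    have hstep : (-2*(u' - u)) * ((1 + u*u') * ip + (u' - u) * ω) = (-2*(u' - u)) * 0 := by
      rw [mul_zero]; linear_combination hrel
    exact mul_left_cancel₀ hA hstep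
  · exact absurd hrel (by positivity)

lemma toB12_SR (S : Matrix (Fin n ⊕ Fin n) (Fin n ⊕ Fin n) ℝ) (c s : ℝ) :
    (S * Rmat n c s).toBlocks₁₂ = c • S.toBlocks₁₂ + s • S.toBlocks₁₁ := by
  have h1 : S * Rmat n c s = c • S + s • (S * sympJ n) := by
    simp [Rmat, Matrix.mul_add, mul_smul_comm, Matrix.mul_one]
  rw [h1]
  ext i j
  simp only [Matrix.toBlocks₁₂, Matrix.toBlocks₁₁, Matrix.of_apply, Matrix.add_apply,
    Matrix.smul_apply, Matrix.mul_apply, smul_eq_mul, Matrix.submatrix_apply]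
  congr 1
  rw [Fintype.sum_sum_type]
  simp [sympJ, Matrix.fromBlocks_apply₁₂, Matrix.fromBlocks_apply₂₂, Matrix.one_apply, mul_ite,
    Finset.sum_ite_eq']

lemma toB12_R (c s : ℝ) : (Rmat n c s).toBlocks₁₂ = s • (1 : Matrix (Fin n) (Fin n) ℝ) := by
  have := toB12_SR (n := n) 1 c s
  rw [Matrix.one_mul] at this
  rw [this]
  ext i j
  simp [Matrix.toBlocks₁₂, Matrix.toBlocks₁₁, Matrix.one_apply]

lemma case_pencil (S : Matrix (Fin n ⊕ Fin n) (Fin n ⊕ Fin n) ℝ)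
    (hS : Sᵀ * sympJ n * S = sympJ n) (g : ℕ → ℝ)
    (hginj : Function.Injective g) (hgpos : ∀ k, 0 < g k)
    (hbad : ∀ k, (cc (g k) • S.toBlocks₁₂ - ss (g k) • S.toBlocks₁₁).det = 0) : False := by
  set A := S.toBlocks₁₁ with hA
  set B := S.toBlocks₁₂ with hB
  have hex : ∀ k, ∃ x, x ≠ 0 ∧ (cc (g k) • B - ss (g k) • A)ᵀ *ᵥ x = 0 := by
    intro k
    have hdet : ((cc (g k) • B - ss (g k) • A)ᵀ).det = 0 := by
      rw [Matrix.det_transpose]; exact hbad k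
    obtain ⟨v, hv0, hv⟩ := Matrix.exists_mulVec_eq_zero_iff.mpr hdet
    exact ⟨v, hv0, hv⟩
  choose x hx0 hxk using hex
  have key : ∀ k, cc (g k) • (Bᵀ *ᵥ x k) = ss (g k) • (Aᵀ *ᵥ x k) := by
    intro k
    have h := hxk k
    rw [Matrix.transpose_sub, Matrix.transpose_smul, Matrix.transpose_smul,
      Matrix.sub_mulVec, Matrix.smul_mulVec, Matrix.smul_mulVec,
      sub_eq_zero] at h
    exact h
  set y : ℕ → Fin n → ℝ := fun k => Bᵀ *ᵥ x k with hy
  set z : ℕ → (Fin n ⊕ Fin n) → ℝ := fun k => Sum.elim (x k) 0 with hz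
  have hzS : ∀ k, (z k) ᵥ* S = Sum.elim (Aᵀ *ᵥ x k) (Bᵀ *ᵥ x k) := by
    intro k
    ext (j | j) <;>
      simp [hz, Matrix.vecMul, Matrix.mulVec, dotProduct, Fintype.sum_sum_type,
        hA, hB, Matrix.toBlocks₁₁, Matrix.toBlocks₁₂, Matrix.transpose_apply, mul_comm]
  have hdetS : IsUnit S.det := isUnit_iff_ne_zero.mpr (Sdet_ne hS)
  have hy0 : ∀ k, y k ≠ 0 := by
    intro k hy0
    have hxA : Aᵀ *ᵥ x k = 0 := by
      have h := key k
      rw [hy] at hy0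
      simp only at hy0
      rw [hy0, smul_zero] at h
      have hs := (ss_pos (hgpos k)).ne'
      rcases smul_eq_zero.mp h.symm with h' | h'
      · exact absurd h' hs
      · exact h'
    have hzero : (z k) ᵥ* S = 0 := by
      rw [hzS k, hxA]
      rw [hy] at hy0
      simp only at hy0
      rw [hy0]
      ext (j | j) <;> simp
    have hzk : z k = 0 := by
      have := congrArg (fun w => w ᵥ* S⁻¹) hzero
      simpa [Matrix.vecMul_vecMul, Matrix.mul_nonsing_inv S hdetS, Matrix.zero_vecMul] using this
    obtain ⟨i, hi⟩ := Function.ne_iff.mp (hx0 k)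
    have : z k (Sum.inl i) = 0 := by rw [hzk]; rfl
    simp [hz] at this
    exact hi this
  apply orth_fam_false y
  · intro k h
    exact hy0 k (dotProduct_self_eq_zero.mp h)
  · intro k l hkl
    have hsymm := symp_form_vecMul hS (z k) (z l)
    rw [hzS k, hzS l] at hsymm
    rw [omega_elim, omega_elim] at hsymm
    simp only [dotProduct_zero, zero_dotProduct, sub_zero, sub_self] at hsymm
    -- hsymm : (Aᵀ *ᵥ x k) ⬝ᵥ (Bᵀ *ᵥ x l) - (Bᵀ *ᵥ x k) ⬝ᵥ (Aᵀ *ᵥ x l) = 0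
    have e1 : cc (g k) * (y k ⬝ᵥ y l) = ss (g k) * ((Aᵀ *ᵥ x k) ⬝ᵥ y l) := by
      have := congrArg (fun w => w ⬝ᵥ y l) (key k)
      simpa [smul_dotProduct] using this
    have e2 : cc (g l) * (y k ⬝ᵥ y l) = ss (g l) * (y k ⬝ᵥ (Aᵀ *ᵥ x l)) := by
      have := congrArg (fun w => y k ⬝ᵥ w) (key l)
      simpa [dotProduct_smul] using this
    have hcross := cross_ne (hgpos k) (hgpos l) (fun h => hkl (hginj h))
    have hmain : (cc (g k) * ss (g l) - cc (g l) * ss (g k)) * (y k ⬝ᵥ y l) = 0 := by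
      have h3 : (Aᵀ *ᵥ x k) ⬝ᵥ y l = y k ⬝ᵥ (Aᵀ *ᵥ x l) := by
        have : (Aᵀ *ᵥ x k) ⬝ᵥ (Bᵀ *ᵥ x l) = (Bᵀ *ᵥ x k) ⬝ᵥ (Aᵀ *ᵥ x l) := by
          linarith [hsymm]
        simpa [hy] using this
      linear_combination ss (g l) * e1 - ss (g k) * e2 + ss (g k) * ss (g l) * h3
    rcases mul_eq_zero.mp hmain with h' | h'
    · exact absurd h' hcross
    · exact h'

lemma JJv (v : Fin n ⊕ Fin n → ℝ) : sympJ n *ᵥ (sympJ n *ᵥ v) = -v := by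
  rw [Matrix.mulVec_mulVec, JJ, Matrix.neg_mulVec, Matrix.one_mulVec]

lemma case_fixed (S : Matrix (Fin n ⊕ Fin n) (Fin n ⊕ Fin n) ℝ)
    (hS : Sᵀ * sympJ n * S = sympJ n) (g : ℕ → ℝ)
    (hginj : Function.Injective g) (hgpos : ∀ k, 0 < g k)
    (hbad : ∀ k, (S - Rmat n (cc (g k)) (ss (g k))).det = 0) : False := by
  have hex : ∀ k, ∃ x, x ≠ 0 ∧ (S - Rmat n (cc (g k)) (ss (g k))) *ᵥ x = 0 := by
    intro k
    obtain ⟨v, hv0, hv⟩ := Matrix.exists_mulVec_eq_zero_iff.mpr (hbad k)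
    exact ⟨v, hv0, hv⟩
  choose v hv0 hvk using hex
  have hSv : ∀ k, S *ᵥ v k = cc (g k) • v k + ss (g k) • (sympJ n *ᵥ v k) := by
    intro k
    have h := hvk k
    rw [Matrix.sub_mulVec, sub_eq_zero] at h
    rw [h, Rmat, Matrix.add_mulVec, Matrix.smul_mulVec, Matrix.smul_mulVec,
      Matrix.one_mulVec]
  set w : ℕ → (Fin n ⊕ Fin n) → ℝ := fun k => v k + g k • (sympJ n *ᵥ v k) with hw
  have hdot : ∀ k l, w k ⬝ᵥ w l
      = (1 + g k * g l) * (v k ⬝ᵥ v l) + (g l - g k) * (v k ⬝ᵥ (sympJ n *ᵥ v l)) := by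
    intro k l
    rw [hw]
    simp only [add_dotProduct, dotProduct_add, smul_dotProduct,
      dotProduct_smul, smul_eq_mul, dot_JJ, dot_J_left, JJv, dotProduct_neg]
    ring
  apply orth_fam_false w
  · intro k h
    rw [hdot k k] at h
    have hvv : (0:ℝ) < v k ⬝ᵥ v k := by
      have hnn : (0:ℝ) ≤ v k ⬝ᵥ v k := Finset.sum_nonneg fun i _ => mul_self_nonneg _
      rcases lt_or_eq_of_le hnn with h' | h'
      · exact h'
      · exact absurd (dotProduct_self_eq_zero.mp h'.symm) (hv0 k)
    nlinarith [sq_nonneg (g k), hvv]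
  · intro k l hkl
    have hsymm := symp_form_mulVec hS (v k) (v l)
    rw [hSv k, hSv l] at hsymm
    set ω := v k ⬝ᵥ (sympJ n *ᵥ v l) with hom
    set ip := v k ⬝ᵥ v l with hip
    have hrel : (cc (g k) * cc (g l) + ss (g k) * ss (g l) - 1) * ω
        + (ss (g k) * cc (g l) - cc (g k) * ss (g l)) * ip = 0 := by
      have e2 : (sympJ n *ᵥ v k) ⬝ᵥ (sympJ n *ᵥ v l) = ip := dot_JJ (v k) (v l)
      have e1 : (sympJ n *ᵥ v k) ⬝ᵥ v l = -ω := by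
        rw [dot_J_left, hom]
      rw [Matrix.mulVec_add, Matrix.mulVec_smul, Matrix.mulVec_smul, JJv] at hsymm
      simp only [add_dotProduct, dotProduct_add, smul_dotProduct,
        dotProduct_smul, dotProduct_neg, smul_eq_mul, e1, e2, ← hom, ← hip] at hsymm
      linear_combination hsymm
    have hkey := circle_key (fun h => hkl (hginj h)) hrel
    rw [hdot k l]
    linear_combination hkey

end SympAux

open SympAux

/-- every symplectic matrix `S` is a product `S = S₁ S₂` of two free
symplectic matrices (symplectic with invertible upper-right block) satisfying in addition
`det (S₁ - I) ≠ 0` and `det (S₂ - I) ≠ 0`. -/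
theorem symplectic_factorization_free_no_fixed_point {n : ℕ}
    (S : Matrix (Fin n ⊕ Fin n) (Fin n ⊕ Fin n) ℝ)
    (hS : Sᵀ * sympJ n * S = sympJ n) :
    ∃ S₁ S₂ : Matrix (Fin n ⊕ Fin n) (Fin n ⊕ Fin n) ℝ,
      S₁ᵀ * sympJ n * S₁ = sympJ n ∧ S₂ᵀ * sympJ n * S₂ = sympJ n ∧
      (S₁.toBlocks₁₂).det ≠ 0 ∧ (S₂.toBlocks₁₂).det ≠ 0 ∧
      (S₁ - 1).det ≠ 0 ∧ (S₂ - 1).det ≠ 0 ∧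
      S = S₁ * S₂ := by
  -- find a good parameter
  have hgood : ∃ u : ℝ, 0 < u ∧
      (cc u • S.toBlocks₁₂ - ss u • S.toBlocks₁₁).det ≠ 0 ∧
      (S - Rmat n (cc u) (ss u)).det ≠ 0 := by
    by_contra hcon
    push_neg at hcon
    set K1 : Set ℕ := {k | (cc ((k:ℝ)+1) • S.toBlocks₁₂ - ss ((k:ℝ)+1) • S.toBlocks₁₁).det = 0}
      with hK1
    set K2 : Set ℕ := {k | (S - Rmat n (cc ((k:ℝ)+1)) (ss ((k:ℝ)+1))).det = 0} with hK2
    have hcover : ∀ k : ℕ, k ∈ K1 ∪ K2 := by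
      intro k
      by_cases h1 : (cc ((k:ℝ)+1) • S.toBlocks₁₂ - ss ((k:ℝ)+1) • S.toBlocks₁₁).det = 0
      · exact Or.inl h1
      · exact Or.inr (hcon ((k:ℝ)+1) (by positivity) h1)
    have hinf : K1.Infinite ∨ K2.Infinite := by
      by_contra h
      push_neg at h
      have hfin : (K1 ∪ K2).Finite :=
        h.1.union h.2
      exact Set.infinite_univ (α := ℕ) (hfin.subset fun k _ => hcover k)
    have hginj : ∀ (e : ℕ ↪ ℕ), Function.Injective (fun k => ((e k : ℕ) : ℝ) + 1) := by
      intro e a b hab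
      simp only [add_left_inj, Nat.cast_inj] at hab
      exact e.injective hab
    rcases hinf with h | h
    · let e' := h.natEmbedding
      refine case_pencil S hS (fun k => ((e' k : ℕ) : ℝ) + 1)
        (hginj ⟨fun k => (e' k : ℕ), fun a b hab => e'.injective (Subtype.ext hab)⟩)
        (fun k => by positivity) (fun k => ?_)
      exact (e' k).2
    · let e' := h.natEmbedding
      refine case_fixed S hS (fun k => ((e' k : ℕ) : ℝ) + 1)
        (hginj ⟨fun k => (e' k : ℕ), fun a b hab => e'.injective (Subtype.ext hab)⟩)
        (fun k => by positivity) (fun k => ?_)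
      exact (e' k).2
  obtain ⟨u, hu, hd1, hd2⟩ := hgood
  set c := cc u with hc
  set s := ss u with hsdef
  have hcs : c^2 + s^2 = 1 := ccss u
  have hcs' : c^2 + (-s)^2 = 1 := by rw [neg_pow]; simpa using hcs
  have hs0 : s ≠ 0 := (ss_pos hu).ne'
  refine ⟨S * Rmat n c (-s), Rmat n c s, ?_, Rsymp c s hcs, ?_, ?_, ?_, ?_, ?_⟩
  · -- S₁ symplectic
    have hS' : Sᵀ * (sympJ n * S) = sympJ n := by rw [← Matrix.mul_assoc, hS]
    calc (S * Rmat n c (-s))ᵀ * sympJ n * (S * Rmat n c (-s))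
        = (Rmat n c (-s))ᵀ * (Sᵀ * (sympJ n * (S * Rmat n c (-s)))) := by
          simp only [Matrix.transpose_mul, Matrix.mul_assoc]
      _ = (Rmat n c (-s))ᵀ * sympJ n * Rmat n c (-s) := by
          rw [show sympJ n * (S * Rmat n c (-s)) = (sympJ n * S) * Rmat n c (-s) from
            (Matrix.mul_assoc _ _ _).symm, show Sᵀ * ((sympJ n * S) * Rmat n c (-s))
            = (Sᵀ * (sympJ n * S)) * Rmat n c (-s) from (Matrix.mul_assoc _ _ _).symm, hS',
            Matrix.mul_assoc]
      _ = sympJ n := Rsymp c (-s) hcs'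
  · -- free S₁
    rw [toB12_SR]
    have : c • S.toBlocks₁₂ + (-s) • S.toBlocks₁₁ = c • S.toBlocks₁₂ - s • S.toBlocks₁₁ := by
      rw [neg_smul, ← sub_eq_add_neg]
    rw [this]
    exact hd1
  · -- free S₂
    rw [toB12_R, Matrix.det_smul, Matrix.det_one, mul_one]
    exact pow_ne_zero _ hs0
  · -- det (S₁ - 1) ≠ 0
    have h1 : (S - Rmat n c s) * Rmat n c (-s) = S * Rmat n c (-s) - 1 := by
      rw [Matrix.sub_mul, Rone c s hcs]
    rw [← h1, Matrix.det_mul]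
    exact mul_ne_zero hd2 (Rdet_ne c (-s) (by rw [hcs']; norm_num))
  · -- det (S₂ - 1) ≠ 0
    have h1 : Rmat n c s - 1 = Rmat n (c-1) s := by
      simp only [Rmat, sub_smul, one_smul]
      abel
    rw [h1]
    apply Rdet_ne
    have : (0:ℝ) < s^2 := by positivity
    nlinarith [sq_nonneg (c-1)]
  · -- factorization
    rw [Matrix.mul_assoc, Rone' c s hcs, Matrix.mul_one]
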